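/- arXiv:1104.1013 — 2 statements merged into one kernel-verified Lean document; each statement's English description precedes it below -/
import Mathlib

section
/- Let V, H be Hilbert spaces over ℂ, j : V → H continuous linear with dense range, and a : V × V → ℂ a continuous coercive sesquilinear form. Then the operator A associated with (a, j) satisfies the range condition: for every y ∈ H there exists x ∈ D(A) such that x + Ax = y, i.e. I + A is surjective. -/
/-- Range condition for the operator `A` associated with a continuous coercive
sesquilinear form `(a, j)` on complex Hilbert spaces: for every `y ∈ H` there exist
`x ∈ D(A)` (i.e. `x = j u` with `a(u,v) = (A x | j v)_H` for all `v`) such that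
`x + A x = y`; in other words `I + A` is surjective. -/
theorem form_operator_range_condition
    {V H : Type*}
    [NormedAddCommGroup V] [InnerProductSpace ℂ V] [CompleteSpace V]
    [NormedAddCommGroup H] [InnerProductSpace ℂ H] [CompleteSpace H]
    (j : V →L[ℂ] H) (hj : DenseRange j)
    (a : V → V → ℂ)
    (ha1 : ∀ u u' v, a (u + u') v = a u v + a u' v)
    (ha2 : ∀ (c : ℂ) (u v : V), a (c • u) v = c * a u v)
    (ha3 : ∀ u v v', a u (v + v') = a u v + a u v')
    (ha4 : ∀ (c : ℂ) (u v : V), a u (c • v) = (starRingEnd ℂ) c * a u v)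
    (M : ℝ) (hbound : ∀ u v, ‖a u v‖ ≤ M * ‖u‖ * ‖v‖)
    (α : ℝ) (hα : 0 < α) (hcoer : ∀ u, α * ‖u‖ ^ 2 ≤ (a u u).re)
    (y : H) :
    ∃ (x z : H) (u : V), j u = x ∧ (∀ v : V, a u v = inner ℂ (j v) z) ∧ x + z = y := by
  classical
  -- the perturbed form
  set b : V → V → ℂ := fun u v => a u v + inner ℂ (j v) (j u) with hb
  have hbbound : ∀ u v : V, ‖b u v‖ ≤ (M * ‖u‖ + ‖j‖ * ‖j‖ * ‖u‖) * ‖v‖ := by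
    intro u v
    calc ‖b u v‖ ≤ ‖a u v‖ + ‖(inner ℂ (j v) (j u) : ℂ)‖ := norm_add_le _ _
      _ ≤ M * ‖u‖ * ‖v‖ + ‖j v‖ * ‖j u‖ := by
          gcongr
          · exact hbound u v
          · exact norm_inner_le_norm _ _
      _ ≤ M * ‖u‖ * ‖v‖ + (‖j‖ * ‖v‖) * (‖j‖ * ‖u‖) := by
          gcongr <;> exact ContinuousLinearMap.le_opNorm _ _
      _ = (M * ‖u‖ + ‖j‖ * ‖j‖ * ‖u‖) * ‖v‖ := by ring
  -- for each u, the functional v ↦ conj (b u v) is continuous linear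
  have φdef : ∀ u : V, ∃ φ : V →L[ℂ] ℂ, ∀ v, φ v = starRingEnd ℂ (b u v) := by
    intro u
    refine ⟨LinearMap.mkContinuous
      { toFun := fun v => starRingEnd ℂ (b u v)
        map_add' := ?_
        map_smul' := ?_ } (M * ‖u‖ + ‖j‖ * ‖j‖ * ‖u‖) ?_, fun v => rfl⟩
    · intro v v'
      simp only [hb, ha3, map_add, inner_add_left]
      ring
    · intro c v
      simp only [hb, ha4, map_mul, map_smul, inner_smul_left, RingHom.id_apply, map_add,
        smul_eq_mul, Complex.conj_conj]
      ring
    · intro v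
      simpa only [LinearMap.coe_mk, AddHom.coe_mk, RCLike.norm_conj] using hbbound u v
  choose φ hφ using φdef
  -- Riesz representation: S0 u with ⟪S0 u, v⟫ = conj (b u v)
  set S0 : V → V := fun u => (InnerProductSpace.toDual ℂ V).symm (φ u) with hS0
  have hS0inner : ∀ u v : V, (inner ℂ (S0 u) v : ℂ) = starRingEnd ℂ (b u v) := by
    intro u v
    rw [hS0]
    rw [← InnerProductSpace.toDual_apply_apply, LinearIsometryEquiv.apply_symm_apply, hφ]
  have hSinner : ∀ u v : V, (inner ℂ v (S0 u) : ℂ) = b u v := by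
    intro u v
    rw [← inner_conj_symm, hS0inner, Complex.conj_conj]
  -- S0 is linear
  have hSadd : ∀ u u' : V, S0 (u + u') = S0 u + S0 u' := by
    intro u u'
    apply ext_inner_right ℂ
    intro v
    rw [inner_add_left, hS0inner, hS0inner, hS0inner, ← map_add]
    congr 1
    simp only [hb, ha1, map_add, inner_add_right]
    ring
  have hSsmul : ∀ (c : ℂ) (u : V), S0 (c • u) = c • S0 u := by
    intro c u
    apply ext_inner_right ℂ
    intro v
    rw [inner_smul_left, hS0inner, hS0inner]
    simp only [hb, ha2, map_smul, inner_smul_right, map_add, map_mul]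
    ring
  -- coercivity of S0
  have hScoer : ∀ u : V, α * ‖u‖ ^ 2 ≤ ((inner ℂ (S0 u) u : ℂ)).re := by
    intro u
    rw [hS0inner]
    have hre : ((starRingEnd ℂ) (b u u)).re = (b u u).re := Complex.conj_re _
    rw [hre]
    simp only [hb, Complex.add_re]
    have h1 : (inner ℂ (j u) (j u) : ℂ).re = ‖j u‖ ^ 2 := by
      rw [inner_self_eq_norm_sq_to_K]; norm_cast
    rw [h1]
    nlinarith [hcoer u, sq_nonneg ‖j u‖]
  -- lower bound ‖S0 u‖ ≥ α ‖u‖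
  have hSlow : ∀ u : V, α * ‖u‖ ≤ ‖S0 u‖ := by
    intro u
    rcases eq_or_ne u 0 with rfl | hu
    · have : S0 (0 : V) = 0 := by
        have := hSsmul 0 0; simpa using this
      simp [this]
    have h1 : α * ‖u‖ ^ 2 ≤ ‖S0 u‖ * ‖u‖ := by
      calc α * ‖u‖ ^ 2 ≤ ((inner ℂ (S0 u) u : ℂ)).re := hScoer u
        _ ≤ ‖(inner ℂ (S0 u) u : ℂ)‖ := Complex.re_le_norm _
        _ ≤ ‖S0 u‖ * ‖u‖ := norm_inner_le_norm _ _
    have hu' : 0 < ‖u‖ := norm_pos_iff.mpr hu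
    nlinarith
  -- upper bound
  have hSup : ∀ u : V, ‖S0 u‖ ≤ (M + ‖j‖ * ‖j‖) * ‖u‖ := by
    intro u
    rcases eq_or_ne (S0 u) 0 with h0 | h0
    · have hl := hSlow u
      rw [h0, norm_zero] at hl
      have hu0 : ‖u‖ = 0 := le_antisymm (by nlinarith) (norm_nonneg u)
      rw [h0, norm_zero, hu0, mul_zero]
    have h2 : ‖S0 u‖ ^ 2 ≤ (M * ‖u‖ + ‖j‖ * ‖j‖ * ‖u‖) * ‖S0 u‖ := by
      have : (‖S0 u‖ : ℝ) ^ 2 = ‖(inner ℂ (S0 u) (S0 u) : ℂ)‖ := by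
        rw [inner_self_eq_norm_sq_to_K]
        simp [sq_abs]
      rw [this, hS0inner]
      rw [RCLike.norm_conj]
      exact hbbound u (S0 u)
    have h3 : 0 < ‖S0 u‖ := norm_pos_iff.mpr h0
    nlinarith
  -- package as continuous linear map
  set S : V →L[ℂ] V := LinearMap.mkContinuous
    { toFun := S0, map_add' := hSadd, map_smul' := hSsmul }
    (M + ‖j‖ * ‖j‖) hSup with hS
  have hSapp : ∀ u, S u = S0 u := fun u => rfl
  -- antilipschitz, hence closed range
  have hanti : AntilipschitzWith (Real.toNNReal α)⁻¹ S := by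
    apply ContinuousLinearMap.antilipschitz_of_bound
    intro u
    rw [NNReal.coe_inv, Real.coe_toNNReal _ hα.le, hSapp,
      inv_mul_eq_div, le_div_iff₀ hα]
    nlinarith [hSlow u]
  have hKclosed : IsClosed (Set.range S) := hanti.isClosed_range S.uniformContinuous
  set K : Submodule ℂ V := LinearMap.range (S : V →ₗ[ℂ] V) with hK
  have hKclosed' : IsClosed (K : Set V) := by
    have : (K : Set V) = Set.range S := by
      ext v; simp [hK, LinearMap.mem_range]
    rw [this]; exact hKclosed
  haveI : CompleteSpace K := hKclosed'.completeSpace_coe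
  -- K has trivial orthogonal complement
  have hKorth : Kᗮ = ⊥ := by
    rw [Submodule.eq_bot_iff]
    intro w hw
    have h1 : (inner ℂ (S w) w : ℂ) = 0 := by
      have := (Submodule.mem_orthogonal K w).mp hw (S w) (LinearMap.mem_range_self _ w)
      exact this
    have h2 : α * ‖w‖ ^ 2 ≤ 0 := by
      have := hScoer w
      rw [← hSapp, h1] at this
      simpa using this
    have h3 : ‖w‖ ^ 2 ≤ 0 := by nlinarith
    have h4 : ‖w‖ ^ 2 = 0 := le_antisymm h3 (sq_nonneg _)
    have h5 : ‖w‖ = 0 := pow_eq_zero_iff (two_ne_zero) |>.mp h4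
    exact norm_eq_zero.mp h5
  have hKtop : K = ⊤ := by
    have h1 : Kᗮᗮ = K := Submodule.orthogonal_orthogonal K
    rw [← h1, hKorth, Submodule.bot_orthogonal_eq_top]
  -- solve S u = adjoint j y
  obtain ⟨u, hu⟩ : ∃ u : V, S u = ContinuousLinearMap.adjoint j y := by
    have : ContinuousLinearMap.adjoint j y ∈ K := hKtop ▸ Submodule.mem_top
    exact this
  refine ⟨j u, y - j u, u, rfl, ?_, by abel⟩
  intro v
  have h1 : b u v = inner ℂ (j v) y := by
    rw [← hSinner u v, ← hSapp, hu]
    rw [ContinuousLinearMap.adjoint_inner_right]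
  have h2 : (inner ℂ (j v) (y - j u) : ℂ) = inner ℂ (j v) y - inner ℂ (j v) (j u) := by
    rw [inner_sub_right]
  rw [h2, ← h1]
  simp [hb]
end

section
/- Let H be a Hilbert space, C ⊆ H a nonempty closed convex set with orthogonal projection P onto C, and let (a, j) be a continuous coercive form on V (with j : V → H continuous, dense range) with associated operator A. Assume that for each u ∈ V there exists w ∈ V such that j(w) = P(j(u)) and Re a(w, u − w) ≥ 0. Then for every λ > 0, the resolvent λ(λ + A)⁻¹ leaves C invariant: λ(λ + A)⁻¹ C ⊆ C. -/
/-- Variational inequality for the metric projection onto a convex set. -/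
lemma proj_var_ineq {𝕂 H : Type*} [RCLike 𝕂] [NormedAddCommGroup H]
    [InnerProductSpace 𝕂 H] [NormedSpace ℝ H] [IsScalarTower ℝ 𝕂 H]
    {C : Set H} (hCv : Convex ℝ C) {x p c : H} (hp : p ∈ C) (hc : c ∈ C)
    (hmin : ∀ c' ∈ C, ‖x - p‖ ≤ ‖x - c'‖) :
    RCLike.re (inner (𝕜 := 𝕂) (x - p) (c - p)) ≤ 0 := by
  by_contra hcon
  push_neg at hcon
  set R := RCLike.re (inner (𝕜 := 𝕂) (x - p) (c - p)) with hR
  set K := ‖c - p‖ ^ 2 with hK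
  have hK0 : (0:ℝ) ≤ K := sq_nonneg _
  set t := min 1 (R / (K + 1)) with ht
  have ht0 : 0 < t := lt_min one_pos (div_pos hcon (by linarith))
  have ht1 : t ≤ 1 := min_le_left _ _
  have ht2 : t ≤ R / (K + 1) := min_le_right _ _
  have hmem : p + t • (c - p) ∈ C := by
    have h := hCv hp hc (by linarith : (0:ℝ) ≤ 1 - t) ht0.le (by ring)
    have : (1 - t) • p + t • c = p + t • (c - p) := by
      simp [smul_sub, sub_smul]; abel
    rwa [this] at h
  have key : ‖x - p‖ ≤ ‖x - (p + t • (c - p))‖ := hmin _ hmem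
  have hexp : ‖x - (p + t • (c - p))‖ ^ 2
      = ‖x - p‖ ^ 2 - 2 * (t * R) + t ^ 2 * K := by
    have h1 : x - (p + t • (c - p)) = (x - p) - t • (c - p) := by abel
    rw [h1, @norm_sub_sq 𝕂]
    have h2 : t • (c - p) = (t : 𝕂) • (c - p) :=
      RCLike.real_smul_eq_coe_smul (K := 𝕂) t (c - p)
    have h3 : RCLike.re (inner (𝕜 := 𝕂) (x - p) (t • (c - p))) = t * R := by
      rw [h2, inner_smul_right, RCLike.re_ofReal_mul]
    have h4 : ‖t • (c - p)‖ ^ 2 = t ^ 2 * K := by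
      rw [norm_smul, mul_pow, hK]
      simp [abs_of_pos ht0, Real.norm_eq_abs]
    rw [h3, h4]
  have hsq : ‖x - p‖ ^ 2 ≤ ‖x - (p + t • (c - p))‖ ^ 2 :=
    pow_le_pow_left₀ (norm_nonneg _) key 2
  rw [hexp] at hsq
  have h5 : 2 * (t * R) ≤ t ^ 2 * K := by linarith
  have h6 : t * (K + 1) ≤ R := (le_div_iff₀ (by linarith)).mp ht2
  nlinarith [sq_nonneg t, mul_pos ht0 hcon]


/-- Invariance criterion: let `C ⊆ H` be a nonempty closed convex set with metric
projection `P`, and let `A` be the operator associated with a continuous coercive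
sesquilinear form `(a, j)`.  If for each `u ∈ V` there is `w ∈ V` with `j w = P (j u)`
and `Re a(w, u − w) ≥ 0`, then for every `λ > 0` the resolvent `λ (λ + A)⁻¹` leaves `C`
invariant: if `(λ + A) x ∈ C` for `x ∈ D(A)`, then `λ x ∈ C`. -/
theorem resolvent_invariance
    {𝕂 : Type*} [RCLike 𝕂] {V H : Type*}
    [NormedAddCommGroup V] [InnerProductSpace 𝕂 V] [CompleteSpace V]
    [NormedAddCommGroup H] [InnerProductSpace 𝕂 H] [CompleteSpace H]
    [NormedSpace ℝ H] [IsScalarTower ℝ 𝕂 H]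
    (j : V →L[𝕂] H) (hj : DenseRange j)
    (a : V → V → 𝕂)
    (ha1 : ∀ u u' v, a (u + u') v = a u v + a u' v)
    (ha2 : ∀ (c : 𝕂) (u v : V), a (c • u) v = c * a u v)
    (ha3 : ∀ u v v', a u (v + v') = a u v + a u v')
    (ha4 : ∀ (c : 𝕂) (u v : V), a u (c • v) = (starRingEnd 𝕂) c * a u v)
    (M : ℝ) (hbound : ∀ u v, ‖a u v‖ ≤ M * ‖u‖ * ‖v‖)
    (α : ℝ) (hα : 0 < α) (hcoer : ∀ u, α * ‖u‖ ^ 2 ≤ RCLike.re (a u u))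
    (C : Set H) (hCne : C.Nonempty) (hCc : IsClosed C) (hCv : Convex ℝ C)
    (P : H → H)
    (hP : ∀ x : H, P x ∈ C ∧ ∀ c ∈ C, ‖x - P x‖ ≤ ‖x - c‖)
    (hinv : ∀ u : V, ∃ w : V, j w = P (j u) ∧ 0 ≤ RCLike.re (a w (u - w)))
    (lam : ℝ) (hlam : 0 < lam) (x y : H) (u : V)
    (hx : j u = x) (hAx : ∀ v : V, a u v = inner 𝕂 (j v) y)
    (hmem : (lam : 𝕂) • x + y ∈ C) :
    (lam : 𝕂) • x ∈ C := by
  obtain ⟨w, hw1, hw2⟩ := hinv ((lam : 𝕂) • u)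
  have hjlu : j ((lam : 𝕂) • u) = (lam : 𝕂) • x := by rw [map_smul, hx]
  rw [hjlu] at hw1
  set d := (lam : 𝕂) • u - w with hd
  have hjd : j d = (lam : 𝕂) • x - P ((lam : 𝕂) • x) := by
    rw [hd, map_sub, hjlu, hw1]
  -- subtraction linearity in the first argument
  have hsub : ∀ v₁ v₂ v : V, a (v₁ - v₂) v = a v₁ v - a v₂ v := by
    intro v₁ v₂ v
    have hneg : a (-v₂) v = - a v₂ v := by
      have := ha2 (-1) v₂ v; simpa using this
    rw [sub_eq_add_neg, ha1, hneg, sub_eq_add_neg]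
  -- coercivity estimate
  set r := RCLike.re (inner (𝕜 := 𝕂) (j d) y) with hr
  have had : a u d = inner 𝕂 (j d) y := hAx d
  have h1 : RCLike.re (a ((lam : 𝕂) • u) d) = lam * r := by
    rw [ha2, had, RCLike.re_ofReal_mul]
  have h2 : a ((lam : 𝕂) • u) d = a d d + a w d := by
    have hdecomp : (lam : 𝕂) • u = d + w := by rw [hd]; abel
    rw [hdecomp, ha1]
  have hwd : 0 ≤ RCLike.re (a w d) := hw2
  have hcoerd : α * ‖d‖ ^ 2 ≤ RCLike.re (a d d) := hcoer d
  have hkey : α * ‖d‖ ^ 2 ≤ lam * r := by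
    rw [← h1, h2, map_add]
    linarith
  -- projection variational inequality
  have hPmem : P ((lam : 𝕂) • x) ∈ C := (hP _).1
  have hproj := proj_var_ineq (𝕂 := 𝕂) hCv hPmem hmem (hP ((lam : 𝕂) • x)).2
  have hsplit : (lam : 𝕂) • x + y - P ((lam : 𝕂) • x) = j d + y := by
    rw [hjd]; abel
  rw [hsplit, ← hjd] at hproj
  rw [inner_add_right, map_add, ← hr, @inner_self_eq_norm_sq 𝕂] at hproj
  -- conclude d = 0
  have hjd0 : (0:ℝ) ≤ ‖j d‖ ^ 2 := sq_nonneg _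
  have hd0 : ‖d‖ ^ 2 ≤ 0 := by nlinarith
  have hdz : d = 0 := by
    have : ‖d‖ = 0 := by nlinarith [norm_nonneg d]
    exact norm_eq_zero.mp this
  have : (lam : 𝕂) • x = P ((lam : 𝕂) • x) := by
    have h0 : j d = 0 := by rw [hdz, map_zero]
    rw [h0] at hjd
    exact (sub_eq_zero.mp hjd.symm)
  rw [this]
  exact hPmem
end
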